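/- If B is a symmetric nonnegative n×n matrix, then the quadratic form x^T B x is a positive hyperbolic polynomial if and only if B has exactly one positive eigenvalue (and x^T B x is positive on the positive orthant). -/

import Mathlib

open Polynomial Matrix

/-- The quadratic form of `B`. -/
noncomputable def quadForm {n : ℕ} (B : Matrix (Fin n) (Fin n) ℝ) (x : Fin n → ℝ) : ℝ :=
  dotProduct x (B.mulVec x)

/-- The univariate polynomial `t ↦ (x + t u)ᵀ B (x + t u)` (for symmetric `B`). -/
noncomputable def lineQuad {n : ℕ} (B : Matrix (Fin n) (Fin n) ℝ) (x u : Fin n → ℝ) :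
    Polynomial ℝ :=
  Polynomial.C (dotProduct x (B.mulVec x)) +
    Polynomial.C (2 * dotProduct x (B.mulVec u)) * Polynomial.X +
    Polynomial.C (dotProduct u (B.mulVec u)) * Polynomial.X ^ 2

lemma quadPoly_eval (a b c t : ℝ) : (C c + C b * X + C a * X^2).eval t = c + b*t + a*t^2 := by
  simp only [eval_add, eval_mul, eval_C, eval_X, eval_pow]

lemma quadPoly_roots_card_eq_two (a b c : ℝ) (ha : a ≠ 0) (hD : 0 ≤ b^2 - 4*a*c) :
    (C c + C b * X + C a * X^2).roots.card = 2 := by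
  set s := Real.sqrt (b^2 - 4*a*c) with hs
  have hss : s * s = b^2 - 4*a*c := Real.mul_self_sqrt hD
  set r₁ := (-b + s) / (2*a) with hr₁
  set r₂ := (-b - s) / (2*a) with hr₂
  have hsum : a * (r₁ + r₂) = -b := by rw [hr₁, hr₂]; field_simp; ring
  have hprod : a * (r₁ * r₂) = c := by
    rw [hr₁, hr₂]; field_simp; linear_combination (-1 : ℝ) * hss
  have key : C c + C b * X + C a * X^2 = C a * ((X - C r₁) * (X - C r₂)) := by
    have : C a * ((X - C r₁) * (X - C r₂))
        = C a * X^2 - C (a*(r₁+r₂)) * X + C (a*(r₁*r₂)) := by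
      simp only [C_mul, C_add]; ring
    rw [this, hsum, hprod]; simp only [C_neg]; ring
  rw [key, roots_C_mul _ ha, roots_mul (mul_ne_zero (X_sub_C_ne_zero r₁) (X_sub_C_ne_zero r₂)),
    roots_X_sub_C, roots_X_sub_C]
  simp

lemma quadPoly_disc_nonneg (a b c : ℝ) (ha : 0 < a)
    (h : (C c + C b * X + C a * X^2).roots.card = 2) : 0 ≤ b^2 - 4*a*c := by
  by_contra hD
  push_neg at hD
  have : ∃ r, (C c + C b * X + C a * X^2).IsRoot r := by
    have hpos : 0 < (C c + C b * X + C a * X^2).roots.card := by omega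
    obtain ⟨r, hr⟩ := Multiset.card_pos_iff_exists_mem.mp hpos
    exact ⟨r, isRoot_of_mem_roots hr⟩
  obtain ⟨r, hr⟩ := this
  rw [IsRoot.def, quadPoly_eval] at hr
  nlinarith [sq_nonneg (2*a*r + b)]

lemma repr_mulVec {n : ℕ} {B : Matrix (Fin n) (Fin n) ℝ} (hB : B.IsHermitian) (z : Fin n → ℝ)
    (i : Fin n) :
    hB.eigenvectorBasis.repr (WithLp.toLp 2 (B.mulVec z)) i
      = hB.eigenvalues i * hB.eigenvectorBasis.repr (WithLp.toLp 2 z) i := by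
  set V := hB.eigenvectorBasis with hV
  rw [V.repr_apply_apply, V.repr_apply_apply]
  have hsym := (Matrix.isHermitian_iff_isSymmetric.mp hB)
  have h1 : (WithLp.toLp 2 (B.mulVec z) : EuclideanSpace ℝ (Fin n)) = Matrix.toEuclideanLin B (WithLp.toLp 2 z) := rfl
  have h2 : Matrix.toEuclideanLin B (V i) = (hB.eigenvalues i • V i : EuclideanSpace ℝ (Fin n)) := by
    have := congrArg (WithLp.toLp 2) (hB.mulVec_eigenvectorBasis i)
    exact this
  rw [h1, ← hsym (V i) _, h2, real_inner_smul_left]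

lemma spectral_dotProduct {n : ℕ} {B : Matrix (Fin n) (Fin n) ℝ} (hB : B.IsHermitian)
    (y z : Fin n → ℝ) :
    dotProduct y (B.mulVec z) =
      ∑ i, hB.eigenvalues i *
        (hB.eigenvectorBasis.repr (WithLp.toLp 2 y) i * hB.eigenvectorBasis.repr (WithLp.toLp 2 z) i) := by
  set V := hB.eigenvectorBasis with hV
  have h0 : dotProduct y (B.mulVec z)
      = @inner ℝ (EuclideanSpace ℝ (Fin n)) _ (WithLp.toLp 2 y) (WithLp.toLp 2 (B.mulVec z)) := by
    rw [PiLp.inner_apply]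
    simp [dotProduct, mul_comm]
  rw [h0, ← V.repr.inner_map_map, PiLp.inner_apply]
  refine Finset.sum_congr rfl fun i _ => ?_
  rw [repr_mulVec hB z i]
  simp only [RCLike.inner_apply, conj_trivial]
  ring

lemma sum_eq_pair {n : ℕ} (i j : Fin n) (hij : i ≠ j) (G : Fin n → ℝ)
    (hG : ∀ k, k ≠ i → k ≠ j → G k = 0) : ∑ k, G k = G i + G j := by
  rw [← Finset.sum_pair hij]
  refine (Finset.sum_subset (Finset.subset_univ _) (fun k _ hk => ?_)).symm
  simp only [Finset.mem_insert, Finset.mem_singleton] at hk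
  push_neg at hk
  exact hG k hk.1 hk.2

/-- For a symmetric nonnegative matrix `B`, the quadratic form `xᵀBx` is a positive
hyperbolic polynomial (positive on the positive orthant and `t ↦ (x+tu)ᵀB(x+tu)` has
2 real roots with multiplicity for all `u > 0`, `x`) if and only if `B` has exactly one
positive eigenvalue (and `xᵀBx` is positive on the positive orthant). -/
theorem quadForm_hyperbolic_iff_one_positive_eigenvalue (n : ℕ)
    (B : Matrix (Fin n) (Fin n) ℝ) (hB : B.IsHermitian) (hnn : ∀ i j, 0 ≤ B i j) :
    ((∀ x : Fin n → ℝ, (∀ i, 0 < x i) → 0 < quadForm B x) ∧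
        ∀ (u x : Fin n → ℝ), (∀ i, 0 < u i) → ((lineQuad B x u).roots.card : ℕ) = 2) ↔
      ((Finset.univ.filter fun i => 0 < hB.eigenvalues i).card = 1 ∧
        ∀ x : Fin n → ℝ, (∀ i, 0 < x i) → 0 < quadForm B x) := by
  classical
  set lam := hB.eigenvalues with hlam
  set V := hB.eigenvectorBasis with hV
  constructor
  · rintro ⟨hpos, hroots⟩
    refine ⟨?_, hpos⟩
    rcases Nat.eq_zero_or_pos n with h0 | hn
    · exfalso
      have h := hpos (fun _ => 1) (fun i => one_pos)
      revert h
      subst h0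
      simp [quadForm, dotProduct]
    set u : Fin n → ℝ := fun _ => 1 with hu
    have hu1 : ∀ i, 0 < u i := fun _ => one_pos
    have ha : 0 < quadForm B u := hpos u hu1
    set d : Fin n → ℝ := fun i => V.repr (WithLp.toLp 2 u) i with hd
    have hqu : quadForm B u = ∑ i, lam i * (d i * d i) := spectral_dotProduct hB u u
    have disc : ∀ x : Fin n → ℝ,
        0 ≤ (2 * dotProduct x (B.mulVec u))^2
          - 4 * (dotProduct u (B.mulVec u)) * (dotProduct x (B.mulVec x)) := by
      intro x
      have h2 := hroots u x hu1
      unfold lineQuad at h2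
      exact quadPoly_disc_nonneg _ _ _ ha h2
    have hex : ∃ i, 0 < lam i := by
      by_contra hno
      push_neg at hno
      have : quadForm B u ≤ 0 := by
        rw [hqu]
        exact Finset.sum_nonpos fun i _ =>
          mul_nonpos_of_nonpos_of_nonneg (hno i) (mul_self_nonneg _)
      linarith
    have huniq : ∀ i j, 0 < lam i → 0 < lam j → i = j := by
      intro i j hi hj
      by_contra hij
      -- build x with zero cross term and positive quadratic form
      obtain ⟨x, hbx, hqx⟩ : ∃ x : Fin n → ℝ,
          dotProduct x (B.mulVec u) = 0 ∧ 0 < dotProduct x (B.mulVec x) := by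
        by_cases hdi : d i = 0
        · refine ⟨(V i : Fin n → ℝ), ?_, ?_⟩
          · rw [spectral_dotProduct hB _ u]
            have : ∀ k, k ≠ i → lam k * (V.repr (WithLp.toLp 2 (V i : Fin n → ℝ)) k * d k) = 0 := by
              intro k hk
              have : V.repr (WithLp.toLp 2 (V i : Fin n → ℝ)) k = 0 := by
                rw [WithLp.toLp_ofLp, V.repr_self]
                simp [EuclideanSpace.single_apply, hk]
              rw [this]; ring
            rw [Finset.sum_eq_single i (fun k _ hk => this k hk) (by simp)]
            have : V.repr (WithLp.toLp 2 (V i : Fin n → ℝ)) i = 1 := by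
              rw [WithLp.toLp_ofLp, V.repr_self]; simp [EuclideanSpace.single_apply]
            rw [this, hdi]; ring
          · rw [spectral_dotProduct hB]
            have h1 : ∀ k, k ≠ i → lam k * (V.repr (WithLp.toLp 2 (V i : Fin n → ℝ)) k * V.repr (WithLp.toLp 2 (V i : Fin n → ℝ)) k) = 0 := by
              intro k hk
              have : V.repr (WithLp.toLp 2 (V i : Fin n → ℝ)) k = 0 := by
                rw [WithLp.toLp_ofLp, V.repr_self]; simp [EuclideanSpace.single_apply, hk]
              rw [this]; ring
            rw [Finset.sum_eq_single i (fun k _ hk => h1 k hk) (by simp)]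
            have : V.repr (WithLp.toLp 2 (V i : Fin n → ℝ)) i = 1 := by
              rw [WithLp.toLp_ofLp, V.repr_self]; simp [EuclideanSpace.single_apply]
            rw [this]
            simpa using hi
        · set α := lam j * d j with hα
          set β := -(lam i * d i) with hβ
          have hβ0 : β ≠ 0 := by
            simp only [hβ, neg_ne_zero]
            exact mul_ne_zero (ne_of_gt hi) hdi
          set cv : EuclideanSpace ℝ (Fin n) := WithLp.toLp 2 (fun k => if k = i then α else if k = j then β else 0)
            with hcv
          set x : Fin n → ℝ := (V.repr.symm cv).ofLp with hx
          have hcx : ∀ k, V.repr (WithLp.toLp 2 x) k = cv k := by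
            intro k
            rw [hx, WithLp.toLp_ofLp]
            rw [V.repr.apply_symm_apply]
          have hcv0 : ∀ k, k ≠ i → k ≠ j → cv k = 0 := by
            intro k h1 h2; simp [hcv, h1, h2]
          have hcvi : cv i = α := by simp [hcv]
          have hji : j ≠ i := fun h => hij h.symm
          have hcvj : cv j = β := by simp [hcv, hji]
          refine ⟨x, ?_, ?_⟩
          · rw [spectral_dotProduct hB x u]
            have := sum_eq_pair i j hij (fun k => lam k * (V.repr (WithLp.toLp 2 x) k * d k))
              (fun k h1 h2 => by
                show lam k * (V.repr (WithLp.toLp 2 x) k * d k) = 0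
                rw [hcx k, hcv0 k h1 h2]; ring)
            rw [this]
            simp only [hcx, hcvi, hcvj]
            rw [hα, hβ]; ring
          · rw [spectral_dotProduct hB x x]
            have := sum_eq_pair i j hij (fun k => lam k * (V.repr (WithLp.toLp 2 x) k * V.repr (WithLp.toLp 2 x) k))
              (fun k h1 h2 => by
                show lam k * (V.repr (WithLp.toLp 2 x) k * V.repr (WithLp.toLp 2 x) k) = 0
                rw [hcx k, hcv0 k h1 h2]; ring)
            rw [this]
            simp only [hcx, hcvi, hcvj]
            have h1 : 0 < lam j * (β * β) := mul_pos hj (mul_self_pos.mpr hβ0)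
            nlinarith [mul_nonneg (le_of_lt hi) (mul_self_nonneg α)]
      have := disc x
      rw [hbx] at this
      have ha' : 0 < dotProduct u (B.mulVec u) := ha
      nlinarith
    obtain ⟨i₀, hi₀⟩ := hex
    have hfil : Finset.univ.filter (fun i => 0 < lam i) = {i₀} := by
      apply Finset.eq_singleton_iff_unique_mem.mpr
      exact ⟨Finset.mem_filter.mpr ⟨Finset.mem_univ _, hi₀⟩,
        fun j hj => huniq j i₀ (Finset.mem_filter.mp hj).2 hi₀⟩
    rw [hfil, Finset.card_singleton]
  · rintro ⟨hcard, hpos⟩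
    refine ⟨hpos, ?_⟩
    intro u x hu
    obtain ⟨i₀, hfil⟩ := Finset.card_eq_one.mp hcard
    have hi₀ : 0 < lam i₀ := by
      have := hfil ▸ Finset.mem_singleton_self i₀
      exact (Finset.mem_filter.mp this).2
    have hneg : ∀ i, i ≠ i₀ → lam i ≤ 0 := by
      intro i hi
      by_contra h
      push_neg at h
      have : i ∈ ({i₀} : Finset (Fin n)) :=
        hfil ▸ Finset.mem_filter.mpr ⟨Finset.mem_univ _, h⟩
      exact hi (Finset.mem_singleton.mp this)
    set d : Fin n → ℝ := fun k => V.repr (WithLp.toLp 2 u) k with hd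
    set c : Fin n → ℝ := fun k => V.repr (WithLp.toLp 2 x) k with hc
    have ha : 0 < quadForm B u := hpos u hu
    have hqu : dotProduct u (B.mulVec u) = ∑ k, lam k * (d k * d k) :=
      spectral_dotProduct hB u u
    have hqx : dotProduct x (B.mulVec x) = ∑ k, lam k * (c k * c k) :=
      spectral_dotProduct hB x x
    have hbv : dotProduct x (B.mulVec u) = ∑ k, lam k * (c k * d k) :=
      spectral_dotProduct hB x u
    have ha' : 0 < ∑ k, lam k * (d k * d k) := by rw [← hqu]; exact ha
    have hd0 : d i₀ ≠ 0 := by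
      intro h
      have : (∑ k, lam k * (d k * d k)) ≤ 0 := by
        apply Finset.sum_nonpos
        intro k _
        by_cases hk : k = i₀
        · subst hk; rw [h]; simp
        · exact mul_nonpos_of_nonpos_of_nonneg (hneg k hk) (mul_self_nonneg _)
      linarith
    set t : ℝ := -(c i₀)/(d i₀) with ht
    have hti : c i₀ + t * d i₀ = 0 := by rw [ht]; field_simp; ring
    have key : (∑ k, lam k * (d k*d k)) * t^2 + 2*(∑ k, lam k*(c k*d k))*t
        + (∑ k, lam k*(c k*c k)) ≤ 0 := by
      have hrw : (∑ k, lam k * (d k*d k)) * t^2 + 2*(∑ k, lam k*(c k*d k))*t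
          + (∑ k, lam k*(c k*c k))
          = ∑ k, lam k * ((c k + t*d k)*(c k + t*d k)) := by
        rw [Finset.sum_mul, Finset.mul_sum, Finset.sum_mul, ← Finset.sum_add_distrib,
          ← Finset.sum_add_distrib]
        exact Finset.sum_congr rfl fun k _ => by ring
      rw [hrw]
      apply Finset.sum_nonpos
      intro k _
      by_cases hk : k = i₀
      · subst hk; rw [hti]; simp
      · exact mul_nonpos_of_nonpos_of_nonneg (hneg k hk) (mul_self_nonneg _)
    have hdisc : 0 ≤ (2 * dotProduct x (B.mulVec u))^2
        - 4 * (dotProduct u (B.mulVec u)) * (dotProduct x (B.mulVec x)) := by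
      rw [hqu, hqx, hbv]
      nlinarith [key, ha', sq_nonneg ((∑ k, lam k * (d k*d k)) * t + (∑ k, lam k*(c k*d k)))]
    unfold lineQuad
    exact quadPoly_roots_card_eq_two _ _ _ (ne_of_gt ha) hdisc
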